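/- arXiv:2001.08079 — 4 statements merged into one kernel-verified Lean document; each statement's English description precedes it below -/
import Mathlib

section
/- For any prime p ≡ 3 (mod 4), the sum over k from 0 to (p-1)/2 of ((1/2)_k)^3 / (k!)^3 is congruent to 0 modulo p^2, where the sum is interpreted as a rational number whose p-adic valuation is at least 2. -/
open Finset

/-- The rising factorial (Pochhammer symbol) `(a)_k = a(a+1)⋯(a+k-1)` for `a : ℚ`. -/
def risingFactorial (a : ℚ) (k : ℕ) : ℚ := ∏ i ∈ Finset.range k, (a + i)
lemma rf_zero (a : ℚ) : risingFactorial a 0 = 1 := by simp [risingFactorial]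
lemma rf_succ (a : ℚ) (k : ℕ) :
    risingFactorial a (k+1) = risingFactorial a k * (a + k) := by
  simp [risingFactorial, Finset.prod_range_succ]
lemma rf_succ' (a : ℚ) (k : ℕ) :
    risingFactorial a (k+1) = a * risingFactorial (a+1) k := by
  induction k with
  | zero => simp [risingFactorial]
  | succ n ih => rw [rf_succ, ih, rf_succ]; push_cast; ring
lemma rf_neg_nat_eq_zero (M k : ℕ) (h : M < k) :
    risingFactorial (-(M:ℚ)) k = 0 := by
  apply Finset.prod_eq_zero (Finset.mem_range.2 h); simp
def T (M k : ℕ) : ℚ :=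
  risingFactorial (1/2) k * risingFactorial (-(M:ℚ)) k * risingFactorial ((M:ℚ)+1) k
    / (k.factorial : ℚ)^3
lemma T_eq_zero (M k : ℕ) (h : M < k) : T M k = 0 := by
  simp [T, rf_neg_nat_eq_zero M k h]
def g (M : ℕ) : ℕ → ℚ
  | 0 => 0
  | 1 => 2*(M:ℚ)+3
  | (j+2) => -2*(2*(M:ℚ)+3)*((j:ℚ)+2)^3 * risingFactorial (1/2) (j+2)
      * risingFactorial ((M:ℚ)+1) (j+2) * risingFactorial (-(M:ℚ)) j
      / ((j+2).factorial : ℚ)^3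

lemma certificate (M k : ℕ) :
    ((M:ℚ)+2)^2 * T (M+2) k - ((M:ℚ)+1)^2 * T M k = g M (k+1) - g M k := by
  match k with
  | 0 =>
      simp [T, g, rf_zero]
      ring
  | 1 =>
      simp only [T, g]
      rw [show ((1:ℕ)) = 0 + 1 from rfl, rf_succ, rf_succ, rf_succ, rf_zero, rf_zero, rf_zero,
        show ((0:ℕ)+1+1) = 0+2 from rfl]
      rw [rf_succ, rf_succ, rf_succ, rf_succ, rf_succ, rf_succ, rf_zero, rf_zero, rf_zero]
      push_cast
      norm_num
      ring
  | (j+2) =>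
      have hM2 : ((M+2 : ℕ) : ℚ) = (M:ℚ)+2 := by push_cast; ring
      have hfj : ((j.factorial : ℚ)) ≠ 0 := by positivity
      have h1 : risingFactorial (1/2) (j+2)
          = risingFactorial (1/2) j * ((1/2 + (j:ℚ)) * (1/2 + (j:ℚ) + 1)) := by
        rw [show j+2 = (j+1)+1 from rfl, rf_succ, rf_succ]; push_cast; ring
      have h1' : risingFactorial (1/2) (j+3)
          = risingFactorial (1/2) j * ((1/2 + (j:ℚ)) * (1/2 + (j:ℚ) + 1) * (1/2 + (j:ℚ) + 2)) := by
        rw [show j+3 = (j+2)+1 from rfl, rf_succ, h1]; push_cast; ring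
      have h2 : risingFactorial (-(M:ℚ)) (j+2)
          = risingFactorial (-(M:ℚ)) j * ((-(M:ℚ) + j) * (-(M:ℚ) + j + 1)) := by
        rw [show j+2 = (j+1)+1 from rfl, rf_succ, rf_succ]; push_cast; ring
      have h2' : risingFactorial (-(M:ℚ)) (j+1)
          = risingFactorial (-(M:ℚ)) j * (-(M:ℚ) + j) := by rw [rf_succ]
      have h3 : risingFactorial ((M:ℚ)+1) (j+2)
          = risingFactorial ((M:ℚ)+1) j * (((M:ℚ)+1 + j) * ((M:ℚ)+1 + j + 1)) := by
        rw [show j+2 = (j+1)+1 from rfl, rf_succ, rf_succ]; push_cast; ring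
      have h3' : risingFactorial ((M:ℚ)+1) (j+3)
          = risingFactorial ((M:ℚ)+1) j
            * (((M:ℚ)+1 + j) * ((M:ℚ)+1 + j + 1) * ((M:ℚ)+1 + j + 2)) := by
        rw [show j+3 = (j+2)+1 from rfl, rf_succ, h3]; push_cast; ring
      have h4 : risingFactorial (-(M:ℚ)-2) (j+2)
          = (-(M:ℚ)-2) * (-(M:ℚ)-1) * risingFactorial (-(M:ℚ)) j := by
        rw [show j+2 = (j+1)+1 from rfl, rf_succ',
          show (-(M:ℚ)-2+1) = -(M:ℚ)-1 from by ring, rf_succ',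
          show (-(M:ℚ)-1+1) = -(M:ℚ) from by ring]
        ring
      have h5 : ((M:ℚ)+1) * ((M:ℚ)+2) * risingFactorial ((M:ℚ)+3) (j+2)
          = risingFactorial ((M:ℚ)+1) j
            * (((M:ℚ)+1+j) * ((M:ℚ)+2+j) * ((M:ℚ)+3+j) * ((M:ℚ)+4+j)) := by
        have e1 : risingFactorial ((M:ℚ)+1) (j+4)
            = ((M:ℚ)+1) * (((M:ℚ)+2) * risingFactorial ((M:ℚ)+3) (j+2)) := by
          rw [show j+4 = (j+3)+1 from rfl, rf_succ',
            show ((M:ℚ)+1+1) = (M:ℚ)+2 from by ring,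
            show j+3 = (j+2)+1 from rfl, rf_succ',
            show ((M:ℚ)+2+1) = (M:ℚ)+3 from by ring]
        have e2 : risingFactorial ((M:ℚ)+1) (j+4)
            = risingFactorial ((M:ℚ)+1) j
              * (((M:ℚ)+1+j) * ((M:ℚ)+2+j) * ((M:ℚ)+3+j) * ((M:ℚ)+4+j)) := by
          rw [show j+4 = (j+3)+1 from rfl, rf_succ, h3']
          push_cast; ring
        rw [← mul_assoc] at e1
        rw [← e1, e2]
      have hM1 : ((M:ℚ)+1) ≠ 0 := by positivity
      have hM2' : ((M:ℚ)+2) ≠ 0 := by positivity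
      have h5' : risingFactorial ((M:ℚ)+3) (j+2)
          = risingFactorial ((M:ℚ)+1) j
            * (((M:ℚ)+1+j) * ((M:ℚ)+2+j) * ((M:ℚ)+3+j) * ((M:ℚ)+4+j))
            / (((M:ℚ)+1) * ((M:ℚ)+2)) := by
        rw [eq_div_iff (by positivity)]
        rw [← h5]; ring
      have hf2 : (((j+2).factorial : ℚ)) = ((j:ℚ)+2) * ((j:ℚ)+1) * (j.factorial : ℚ) := by
        rw [show j+2 = (j+1)+1 from rfl, Nat.factorial_succ, Nat.factorial_succ]
        push_cast; ring
      have hf3 : (((j+3).factorial : ℚ)) = ((j:ℚ)+3) * ((j:ℚ)+2) * ((j:ℚ)+1) * (j.factorial : ℚ) := by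
        rw [show j+3 = (j+2)+1 from rfl, Nat.factorial_succ]
        push_cast
        rw [hf2]
        ring
      show ((M:ℚ)+2)^2 * T (M+2) (j+2) - ((M:ℚ)+1)^2 * T M (j+2) = g M (j+3) - g M (j+2)
      rw [show g M (j+3) = g M ((j+1)+2) from rfl]
      simp only [T, g]
      rw [hM2, show ((M:ℚ)+2+1) = (M:ℚ)+3 from by ring,
        show (-((M:ℚ)+2)) = -(M:ℚ)-2 from by ring]
      rw [h1, h1', h2, h2', h3, h3', h4, h5', hf2, hf3]
      push_cast
      field_simp
      ring

def SW (M : ℕ) : ℚ := ∑ k ∈ Finset.range (M+1), T M k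

lemma g_top (M : ℕ) : g M (M+3) = 0 := by
  rw [show M+3 = (M+1)+2 from rfl]
  simp only [g]
  rw [rf_neg_nat_eq_zero M (M+1) (by omega)]
  ring

lemma SW_rec (M : ℕ) : ((M:ℚ)+2)^2 * SW (M+2) = ((M:ℚ)+1)^2 * SW M := by
  have htel : ∑ k ∈ Finset.range (M+3), (g M (k+1) - g M k) = g M (M+3) - g M 0 :=
    Finset.sum_range_sub (g M) (M+3)
  have h0 : g M 0 = 0 := rfl
  rw [g_top, h0, sub_zero] at htel
  have hsum : ∑ k ∈ Finset.range (M+3),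
      (((M:ℚ)+2)^2 * T (M+2) k - ((M:ℚ)+1)^2 * T M k) = 0 := by
    rw [Finset.sum_congr rfl (fun k _ => certificate M k)]
    exact htel
  rw [Finset.sum_sub_distrib, ← Finset.mul_sum, ← Finset.mul_sum, sub_eq_zero] at hsum
  have e1 : ∑ k ∈ Finset.range (M+3), T (M+2) k = SW (M+2) := rfl
  have e2 : ∑ k ∈ Finset.range (M+3), T M k = SW M := by
    rw [SW]
    symm
    apply Finset.sum_subset
    · intro x hx
      simp only [Finset.mem_range] at hx ⊢
      omega
    · intro k _ hk
      simp only [Finset.mem_range] at hk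
      exact T_eq_zero M k (by omega)
  rw [e1, e2] at hsum
  exact hsum

lemma SW_one : SW 1 = 0 := by
  rw [SW]
  rw [Finset.sum_range_succ, Finset.sum_range_succ, Finset.sum_range_zero]
  simp only [T]
  rw [show (1:ℕ) = 0+1 from rfl, rf_succ, rf_succ, rf_succ, rf_zero]
  norm_num [rf_zero]

lemma SW_odd (j : ℕ) : SW (2*j+1) = 0 := by
  induction j with
  | zero => exact SW_one
  | succ n ih =>
      have := SW_rec (2*n+1)
      rw [ih, mul_zero] at this
      have h2 : ((2*n+1 : ℕ):ℚ)+2 ≠ 0 := by positivity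
      have hfin : SW (2*n+1+2) = 0 := by
        rcases mul_eq_zero.mp this with h' | h'
        · exact absurd h' (pow_ne_zero 2 (by push_cast; positivity))
        · exact h'
      rw [show 2*(n+1)+1 = 2*n+1+2 from by ring]
      exact hfin

/-- `q` is `p`-integral: expressible as `c/d` with `p ∤ d`. -/
def PI (p : ℕ) (q : ℚ) : Prop := ∃ c d : ℤ, ¬((p:ℤ) ∣ d) ∧ q * d = c

section PIlemmas
variable {p : ℕ} (hp : p.Prime)
include hp

lemma not_dvd_one' : ¬ ((p:ℤ) ∣ 1) := by
  intro hd
  have := Int.le_of_dvd one_pos hd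
  have := hp.two_le
  omega

lemma PI_int (n : ℤ) : PI p n := ⟨n, 1, not_dvd_one' hp, by simp⟩

lemma PI_add {q₁ q₂ : ℚ} (h₁ : PI p q₁) (h₂ : PI p q₂) : PI p (q₁ + q₂) := by
  obtain ⟨c₁, d₁, hd₁, e₁⟩ := h₁
  obtain ⟨c₂, d₂, hd₂, e₂⟩ := h₂
  refine ⟨c₁*d₂ + c₂*d₁, d₁*d₂, ?_, ?_⟩
  · intro hd
    rcases ((Nat.prime_iff_prime_int.mp hp).dvd_mul.mp hd) with h | h
    exacts [hd₁ h, hd₂ h]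
  · push_cast
    calc (q₁+q₂)*((d₁:ℚ)*d₂) = q₁*d₁*d₂ + q₂*d₂*d₁ := by ring
    _ = (c₁:ℚ)*d₂ + (c₂:ℚ)*d₁ := by rw [e₁, e₂]

lemma PI_mul {q₁ q₂ : ℚ} (h₁ : PI p q₁) (h₂ : PI p q₂) : PI p (q₁ * q₂) := by
  obtain ⟨c₁, d₁, hd₁, e₁⟩ := h₁
  obtain ⟨c₂, d₂, hd₂, e₂⟩ := h₂
  refine ⟨c₁*c₂, d₁*d₂, ?_, ?_⟩
  · intro hd
    rcases ((Nat.prime_iff_prime_int.mp hp).dvd_mul.mp hd) with h | h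
    exacts [hd₁ h, hd₂ h]
  · push_cast
    calc (q₁*q₂)*((d₁:ℚ)*d₂) = (q₁*d₁)*(q₂*d₂) := by ring
    _ = (c₁:ℚ)*c₂ := by rw [e₁, e₂]

lemma PI_zero : PI p 0 := ⟨0, 1, not_dvd_one' hp, by simp⟩

lemma PI_one : PI p 1 := ⟨1, 1, not_dvd_one' hp, by simp⟩

lemma PI_sum {ι : Type*} (s : Finset ι) (f : ι → ℚ) (h : ∀ i ∈ s, PI p (f i)) :
    PI p (∑ i ∈ s, f i) :=
  Finset.sum_induction f (PI p) (fun _ _ => PI_add hp) (PI_zero hp) h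

lemma PI_prod {ι : Type*} (s : Finset ι) (f : ι → ℚ) (h : ∀ i ∈ s, PI p (f i)) :
    PI p (∏ i ∈ s, f i) :=
  Finset.prod_induction f (PI p) (fun _ _ => PI_mul hp) (PI_one hp) h

lemma PI_prod_sub (x y : ℕ → ℚ) :
    ∀ n : ℕ, (∀ i, i < n → PI p (x i)) → (∀ i, i < n → PI p (y i)) →
    (∀ i, i < n → ∃ e, PI p e ∧ x i - y i = (p:ℚ)^2 * e) →
    ∃ D, PI p D ∧ (∏ i ∈ Finset.range n, x i) - (∏ i ∈ Finset.range n, y i) = (p:ℚ)^2 * D := by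
  intro n
  induction n with
  | zero => intro _ _ _; exact ⟨0, PI_zero hp, by simp⟩
  | succ n ih =>
      intro hx hy hxy
      obtain ⟨D, hD, eD⟩ := ih (fun i hi => hx i (by omega)) (fun i hi => hy i (by omega))
        (fun i hi => hxy i (by omega))
      obtain ⟨e, he, hee⟩ := hxy n (by omega)
      refine ⟨x n * D + e * (∏ i ∈ Finset.range n, y i), ?_, ?_⟩
      · exact PI_add hp (PI_mul hp (hx n (by omega)) hD)
          (PI_mul hp he (PI_prod hp _ _ (fun i hi => hy i (by simp at hi; omega))))
      · rw [Finset.prod_range_succ, Finset.prod_range_succ]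
        calc (∏ i ∈ Finset.range n, x i) * x n - (∏ i ∈ Finset.range n, y i) * y n
            = x n * ((∏ i ∈ Finset.range n, x i) - (∏ i ∈ Finset.range n, y i))
              + (x n - y n) * (∏ i ∈ Finset.range n, y i) := by ring
        _ = x n * ((p:ℚ)^2 * D) + ((p:ℚ)^2 * e) * (∏ i ∈ Finset.range n, y i) := by
              rw [eD, hee]
        _ = (p:ℚ)^2 * (x n * D + e * (∏ i ∈ Finset.range n, y i)) := by ring

end PIlemmas

lemma rf_pos_nat (m : ℕ) : ∀ k : ℕ,
    risingFactorial ((m:ℚ)+1) k = (((m+k).choose k : ℕ) : ℚ) * (k.factorial : ℚ) := by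
  intro k
  induction k with
  | zero => simp [rf_zero]
  | succ n ih =>
      rw [rf_succ, ih]
      have h := Nat.add_one_mul_choose_eq (m+n) n
      have hc : ((m:ℚ)+n+1) * ((m+n).choose n : ℕ) = (((m+n+1).choose (n+1) : ℕ) : ℚ) * ((n:ℚ)+1) := by
        exact_mod_cast congrArg (fun x : ℕ => (x : ℚ)) (by simpa using h)
      rw [show (m+(n+1)) = (m+n+1) from by ring, Nat.factorial_succ]
      push_cast
      linear_combination (n.factorial : ℚ) * hc

lemma rf_neg_nat (m : ℕ) : ∀ k : ℕ, k ≤ m →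
    risingFactorial (-(m:ℚ)) k = (-1)^k * ((m.choose k : ℕ) : ℚ) * (k.factorial : ℚ) := by
  intro k
  induction k with
  | zero => simp [rf_zero]
  | succ n ih =>
      intro hn
      rw [rf_succ, ih (by omega)]
      have h := Nat.choose_succ_right_eq m n
      have hsub : ((m - n : ℕ) : ℚ) = (m:ℚ) - (n:ℚ) := by
        have hnm : n ≤ m := by omega
        push_cast [hnm]
        ring
      have hc : ((m.choose (n+1) : ℕ) : ℚ) * ((n:ℚ)+1) = ((m.choose n : ℕ) : ℚ) * ((m:ℚ) - (n:ℚ)) := by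
        have := congrArg (fun x : ℕ => (x : ℚ)) h
        push_cast at this
        rw [hsub] at this
        linarith [this]
      rw [Nat.factorial_succ]
      push_cast
      linear_combination (-1:ℚ)^n * (n.factorial : ℚ) * hc

lemma key_term {p : ℕ} (hp : p.Prime) (hp2 : p % 2 = 1) (m k : ℕ) (hk : k ≤ m)
    (hmp : m < p) (hcast : (p:ℚ) = 2*(m:ℚ)+1) :
    ∃ r : ℚ, PI p r ∧
      risingFactorial (1/2) k ^ 3 / (k.factorial : ℚ) ^ 3 = T m k + (p:ℚ)^2 * r := by
  have hfk : ((k.factorial : ℚ)) ≠ 0 := by positivity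
  have hnd2 : ¬ ((p:ℤ) ∣ 2) := by
    intro hd
    have h2 : (p:ℤ) ∣ ((2:ℕ):ℤ) := by exact_mod_cast hd
    have := Nat.le_of_dvd (by norm_num) (Int.natCast_dvd_natCast.mp h2)
    have := hp.two_le
    omega
  have hnd4 : ¬ ((p:ℤ) ∣ 4) := by
    intro hd
    rcases (Nat.prime_iff_prime_int.mp hp).dvd_mul.mp (show (p:ℤ) ∣ 2*2 by norm_num at hd ⊢; exact_mod_cast hd) with h | h
    exacts [hnd2 h, hnd2 h]
  have hndfac : ¬ ((p:ℤ) ∣ (k.factorial : ℤ)) := by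
    intro hd
    have := (Nat.Prime.dvd_factorial hp).mp (Int.natCast_dvd_natCast.mp hd)
    omega
  have hndpow : ¬ ((p:ℤ) ∣ 2^k) := by
    intro hd
    exact hnd2 ((Nat.prime_iff_prime_int.mp hp).dvd_of_dvd_pow hd)
  -- p-integrality of A = rf(1/2,k)/k!
  have hA2 : risingFactorial (1/2) k * 2^k = ((∏ i ∈ Finset.range k, (2*i+1) : ℕ) : ℚ) := by
    rw [risingFactorial, show (2:ℚ)^k = ∏ _i ∈ Finset.range k, (2:ℚ) from by
      simp [Finset.prod_const], ← Finset.prod_mul_distrib]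
    push_cast
    exact Finset.prod_congr rfl (fun i _ => by ring)
  have hPIA : PI p (risingFactorial (1/2) k / (k.factorial : ℚ)) := by
    refine ⟨((∏ i ∈ Finset.range k, (2*i+1) : ℕ) : ℤ), 2^k * (k.factorial : ℤ), ?_, ?_⟩
    · intro hd
      rcases (Nat.prime_iff_prime_int.mp hp).dvd_mul.mp hd with h | h
      exacts [hndpow h, hndfac h]
    · push_cast
      push_cast at hA2
      field_simp
      linear_combination hA2
  -- the product difference
  have hprodsub : ∃ D : ℚ, PI p D ∧
      (∏ i ∈ Finset.range k, ((1/2 + (i:ℚ))^2)) -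
      (∏ i ∈ Finset.range k, ((-(m:ℚ) + i) * ((m:ℚ)+1+i))) = (p:ℚ)^2 * D := by
    apply PI_prod_sub hp
    · intro i _
      exact ⟨(2*(i:ℤ)+1)^2, 4, hnd4, by push_cast; ring⟩
    · intro i _
      exact ⟨(-(m:ℤ)+i) * ((m:ℤ)+1+i), 1, not_dvd_one' hp, by push_cast; ring⟩
    · intro i _
      refine ⟨1/4, ⟨1, 4, hnd4, by norm_num⟩, ?_⟩
      rw [hcast]; ring
  obtain ⟨D, hD, eD⟩ := hprodsub
  have hprod_x : risingFactorial (1/2) k ^ 2 = ∏ i ∈ Finset.range k, ((1/2 + (i:ℚ))^2) := by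
    rw [risingFactorial, ← Finset.prod_pow]
  have hprod_y : risingFactorial (-(m:ℚ)) k * risingFactorial ((m:ℚ)+1) k
      = ∏ i ∈ Finset.range k, ((-(m:ℚ) + i) * ((m:ℚ)+1+i)) := by
    rw [risingFactorial, risingFactorial, ← Finset.prod_mul_distrib]
  have hkey : risingFactorial (1/2) k ^ 2
      - risingFactorial (-(m:ℚ)) k * risingFactorial ((m:ℚ)+1) k = (p:ℚ)^2 * D := by
    rw [hprod_x, hprod_y]; exact eD
  refine ⟨(risingFactorial (1/2) k / (k.factorial : ℚ)) * (D * (1/(k.factorial : ℚ)^2)),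
    PI_mul hp hPIA (PI_mul hp hD ⟨1, (k.factorial : ℤ)^2, ?_, by push_cast; field_simp⟩), ?_⟩
  · intro hd
    rcases (Nat.prime_iff_prime_int.mp hp).dvd_mul.mp (by simpa [sq] using hd) with h | h
    exacts [hndfac h, hndfac h]
  · rw [T]
    field_simp
    linear_combination risingFactorial (1/2) k * hkey

lemma sum_decomp {p : ℕ} (hp : p.Prime) (s : Finset ℕ) (F G : ℕ → ℚ)
    (h : ∀ k ∈ s, ∃ r, PI p r ∧ F k = G k + (p:ℚ)^2 * r) :
    ∃ ρ, PI p ρ ∧ ∑ k ∈ s, F k = (∑ k ∈ s, G k) + (p:ℚ)^2 * ρ := by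
  induction s using Finset.cons_induction with
  | empty => exact ⟨0, PI_zero hp, by simp⟩
  | cons a s ha ih =>
      obtain ⟨ρ, hρ, hs⟩ := ih (fun k hk => h k (Finset.mem_cons.2 (Or.inr hk)))
      obtain ⟨r, hr, hF⟩ := h a (Finset.mem_cons_self a s)
      refine ⟨r + ρ, PI_add hp hr hρ, ?_⟩
      rw [Finset.sum_cons, Finset.sum_cons, hF, hs]
      ring

/-- For any prime `p ≡ 3 (mod 4)`, `∑_{k=0}^{(p-1)/2} (1/2)_k^3 / k!^3 ≡ 0 (mod p^2)`,
i.e. this rational number has `p`-adic valuation at least `2`. -/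
theorem stmt0 (p : ℕ) (hp : p.Prime) (h : p % 4 = 3) :
    ∃ a b : ℤ, ¬ ((p : ℤ) ∣ b) ∧
      (∑ k ∈ Finset.range ((p - 1) / 2 + 1),
          risingFactorial (1/2) k ^ 3 / (k.factorial : ℚ) ^ 3) * (b : ℚ)
        = (p : ℚ) ^ 2 * (a : ℚ) := by
  have hp2 : p % 2 = 1 := by omega
  have hple := hp.two_le
  set m := (p - 1) / 2 with hm
  have hpm : p = 2 * m + 1 := by omega
  have hmp : m < p := by omega
  have hcast : (p:ℚ) = 2*(m:ℚ)+1 := by exact_mod_cast congrArg (fun x : ℕ => (x:ℚ)) hpm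
  obtain ⟨j, hj⟩ : ∃ j, m = 2*j+1 := ⟨(m-1)/2, by omega⟩
  obtain ⟨ρ, hρ, hsum⟩ := sum_decomp hp (Finset.range (m+1))
    (fun k => risingFactorial (1/2) k ^ 3 / (k.factorial : ℚ) ^ 3) (fun k => T m k)
    (fun k hk => key_term hp hp2 m k (by simp at hk; omega) hmp hcast)
  have hSW : (∑ k ∈ Finset.range (m+1), T m k) = 0 := by
    have : SW m = 0 := by rw [hj]; exact SW_odd j
    simpa [SW] using this
  rw [hSW, zero_add] at hsum
  obtain ⟨c, d, hd, hcd⟩ := hρ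
  refine ⟨c, d, hd, ?_⟩
  rw [hsum, mul_assoc, hcd]
end

section
/- Let n ≡ 3 (mod 4) be a positive integer. Then Φ_n(q)^2 divides the rational function [n^2]_{q^2} · (q^3;q^4)_{(n^2-1)/2} / (q^5;q^4)_{(n^2-1)/2} · q^{(1-n^2)/2} in the localization of ℚ[q] at Φ_n(q). -/
open Polynomial Finset

/-- The variable `q` as an element of the field of rational functions `ℚ(q)`. -/
noncomputable def Q : RatFunc ℚ := RatFunc.X

/-- The q-shifted factorial `(a;b)_k = (1-a)(1-ab)⋯(1-ab^{k-1})` in `ℚ(q)`. -/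
noncomputable def qPoch (a b : RatFunc ℚ) (k : ℕ) : RatFunc ℚ :=
  ∏ i ∈ Finset.range k, (1 - a * b ^ i)

/-- `Φ_n ∣ X^m - 1 ↔ n ∣ m` over `ℚ`. -/
lemma cyc_dvd_X_pow_sub_one_iff (n m : ℕ) (hn : 0 < n) :
    Polynomial.cyclotomic n ℚ ∣ (X : Polynomial ℚ) ^ m - 1 ↔ n ∣ m := by
  constructor
  · intro hdvd
    have h2 : Polynomial.cyclotomic n ℂ ∣ (X : Polynomial ℂ) ^ m - 1 := by
      have := Polynomial.map_dvd (algebraMap ℚ ℂ) hdvd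
      simpa [Polynomial.map_cyclotomic] using this
    have hζ := Complex.isPrimitiveRoot_exp n hn.ne'
    have hroot : ((X : Polynomial ℂ) ^ m - 1).IsRoot (Complex.exp (2 * Real.pi * Complex.I / n)) := by
      obtain ⟨c, hc⟩ := h2
      have := hζ.isRoot_cyclotomic hn
      rw [hc]
      simp only [IsRoot, eval_mul]
      rw [this]
      ring
    have : Complex.exp (2 * Real.pi * Complex.I / n) ^ m = 1 := by
      have := hroot
      simp only [IsRoot, eval_sub, eval_pow, eval_X, eval_one, sub_eq_zero] at this
      exact this
    exact (hζ.pow_eq_one_iff_dvd m).mp this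
  · rintro ⟨c, rfl⟩
    exact dvd_trans (Polynomial.cyclotomic.dvd_X_pow_sub_one n ℚ)
      (pow_one_sub_dvd_pow_mul_sub_one X n c)

lemma cyc_dvd_one_sub_X_pow_iff (n m : ℕ) (hn : 0 < n) :
    Polynomial.cyclotomic n ℚ ∣ 1 - (X : Polynomial ℚ) ^ m ↔ n ∣ m := by
  rw [← cyc_dvd_X_pow_sub_one_iff n m hn]
  constructor
  · intro h; have := dvd_neg.mpr h; simpa using this
  · intro h; have := dvd_neg.mpr h; simpa using this

/-- product of elements each exactly divisible once by a prime -/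
lemma prod_eq_pow_mul {α : Type*} [CommRing α] {p : α} (hp : Prime p) (s : Finset ℕ)
    (f : ℕ → α) (h : ∀ i ∈ s, p ∣ f i ∧ ¬ (p * p ∣ f i)) :
    ∃ c, (∏ i ∈ s, f i) = p ^ s.card * c ∧ ¬ p ∣ c := by
  classical
  induction s using Finset.induction_on with
  | empty =>
      exact ⟨1, by simp, fun hd => hp.not_unit (isUnit_of_dvd_one hd)⟩
  | @insert a s ha ih =>
      obtain ⟨c, hc, hpc⟩ := ih (fun i hi => h i (Finset.mem_insert_of_mem hi))
      obtain ⟨hd1, hd2⟩ := h a (Finset.mem_insert_self a s)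
      obtain ⟨w, hw⟩ := hd1
      have hpw : ¬ p ∣ w := fun hd => hd2 (by obtain ⟨v, hv⟩ := hd; exact ⟨v, by rw [hw, hv]; ring⟩)
      refine ⟨w * c, ?_, ?_⟩
      · rw [Finset.prod_insert ha, hc, hw, Finset.card_insert_of_notMem ha, pow_succ]
        ring
      · intro hd
        rcases hp.dvd_mul.mp hd with h' | h'
        · exact hpw h'
        · exact hpc h'

/-- For `n ≡ 3 (mod 4)` positive, `Φ_n(q)^2` divides
`[n^2]_{q^2} (q^3;q^4)_{(n^2-1)/2} / (q^5;q^4)_{(n^2-1)/2} · q^{(1-n^2)/2}`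
in the localization of `ℚ[q]` at `Φ_n(q)`. -/
theorem stmt9 (n : ℕ) (hn : 0 < n) (h : n % 4 = 3) :
    ∃ a b : Polynomial ℚ, ¬ (Polynomial.cyclotomic n ℚ ∣ b) ∧
      ((∑ i ∈ Finset.range (n ^ 2), Q ^ (2 * i))
          * qPoch (Q ^ 3) (Q ^ 4) ((n ^ 2 - 1) / 2)
          / qPoch (Q ^ 5) (Q ^ 4) ((n ^ 2 - 1) / 2)
          * (Q ^ ((n ^ 2 - 1) / 2))⁻¹)
        * algebraMap (Polynomial ℚ) (RatFunc ℚ) b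
      = algebraMap (Polynomial ℚ) (RatFunc ℚ) (Polynomial.cyclotomic n ℚ ^ 2 * a) := by
  classical
  obtain ⟨t, ht⟩ : ∃ t, n = 4 * t + 3 := ⟨n / 4, by omega⟩
  set k : ℕ := (n ^ 2 - 1) / 2 with hkdef
  have hn2 : n ^ 2 = 16 * (t * t) + 24 * t + 9 := by rw [ht]; ring
  have hk : k = 8 * (t * t) + 12 * t + 4 := by
    rw [hkdef, hn2]; generalize t * t = u; omega
  set Φ : Polynomial ℚ := Polynomial.cyclotomic n ℚ with hΦ
  have hirr : Irreducible Φ := Polynomial.cyclotomic.irreducible_rat hn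
  have hp : Prime Φ := hirr.prime
  -- polynomials
  set S : Polynomial ℚ := ∑ i ∈ Finset.range (n ^ 2), X ^ (2 * i) with hSdef
  set A : Polynomial ℚ := ∏ i ∈ Finset.range k, (1 - X ^ 3 * (X ^ 4) ^ i) with hAdef
  set B : Polynomial ℚ := ∏ i ∈ Finset.range k, (1 - X ^ 5 * (X ^ 4) ^ i) with hBdef
  have hfactA : ∀ i : ℕ, (1 : Polynomial ℚ) - X ^ 3 * (X ^ 4) ^ i = 1 - X ^ (4 * i + 3) := by
    intro i; rw [← pow_mul, ← pow_add, Nat.add_comm 3 (4 * i)]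
  have hfactB : ∀ i : ℕ, (1 : Polynomial ℚ) - X ^ 5 * (X ^ 4) ^ i = 1 - X ^ (4 * i + 5) := by
    intro i; rw [← pow_mul, ← pow_add, Nat.add_comm 5 (4 * i)]
  -- not-square dvd of 1 - X^m
  have hsqf : ∀ m : ℕ, 0 < m → ¬ (Φ * Φ ∣ 1 - (X : Polynomial ℚ) ^ m) := by
    intro m hm hd
    have hsep : ((X : Polynomial ℚ) ^ m - 1).Separable :=
      Polynomial.X_pow_sub_one_separable_iff.mpr (by
        exact_mod_cast (Nat.cast_ne_zero (R := ℚ)).mpr hm.ne')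
    have hsf := hsep.squarefree
    have : Φ * Φ ∣ (X : Polynomial ℚ) ^ m - 1 := by
      have := dvd_neg.mpr hd; simpa using this
    exact hp.not_unit (hsf Φ this)
  -- index sets
  set I3 : Finset ℕ := (Finset.range k).filter (fun i => n ∣ 4 * i + 3) with hI3
  set I5 : Finset ℕ := (Finset.range k).filter (fun i => n ∣ 4 * i + 5) with hI5
  -- card I5 + 1 ≤ card I3
  have hmap : ∀ i ∈ I5, i + (2 * t + 2) ∈ I3 := by
    intro i hi
    rw [hI5, Finset.mem_filter, Finset.mem_range] at hi
    obtain ⟨hik, m, hm⟩ := hi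
    have h1 : (4 * t + 3) * m = 4 * i + 5 := by rw [← ht, ← hm]
    have e1 := Nat.mul_mod (4 * t + 3) m 4
    rw [h1] at e1
    have h2 : (4 * t + 3) % 4 = 3 := by omega
    rw [h2] at e1
    have hm4 : m % 4 = 3 := by omega
    have h3 : m ≤ 8 * t + 3 := by
      by_contra hc
      push_neg at hc
      have h4 : 8 * t + 7 ≤ m := by omega
      have h5 : (4 * t + 3) * (8 * t + 7) ≤ (4 * t + 3) * m := Nat.mul_le_mul_left _ h4
      rw [h1] at h5
      have h6 : (4 * t + 3) * (8 * t + 7) = 32 * (t * t) + 52 * t + 21 := by ring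
      rw [h6] at h5
      rw [hk] at hik
      generalize t * t = u at h5 hik
      omega
    have h7 : (4 * t + 3) * m ≤ (4 * t + 3) * (8 * t + 3) := Nat.mul_le_mul_left _ h3
    rw [h1] at h7
    have h8 : (4 * t + 3) * (8 * t + 3) = 32 * (t * t) + 36 * t + 9 := by ring
    rw [h8] at h7
    rw [hI3, Finset.mem_filter, Finset.mem_range]
    constructor
    · rw [hk]; generalize t * t = u at h7 ⊢; omega
    · refine ⟨m + 2, ?_⟩
      have : n * (m + 2) = n * m + 2 * n := by ring
      rw [this, ← hm]
      omega
  have hinj : Set.InjOn (fun i => i + (2 * t + 2)) I5 := fun a _ b _ hab => by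
    simpa using hab
  have htI3 : t ∈ I3 := by
    rw [hI3, Finset.mem_filter, Finset.mem_range]
    constructor
    · rw [hk]; generalize t * t = u; omega
    · exact ⟨1, by omega⟩
  have htnotmem : t ∉ I5.image (fun i => i + (2 * t + 2)) := by
    intro hmem
    rw [Finset.mem_image] at hmem
    obtain ⟨i, _, hi⟩ := hmem
    omega
  have hcard : I5.card + 1 ≤ I3.card := by
    have hsub : insert t (I5.image (fun i => i + (2 * t + 2))) ⊆ I3 := by
      intro x hx
      rw [Finset.mem_insert] at hx
      rcases hx with rfl | hx
      · exact htI3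
      · rw [Finset.mem_image] at hx
        obtain ⟨i, hi, rfl⟩ := hx
        exact hmap i hi
    calc I5.card + 1 = (insert t (I5.image (fun i => i + (2 * t + 2)))).card := by
          rw [Finset.card_insert_of_notMem htnotmem, Finset.card_image_of_injOn hinj]
      _ ≤ I3.card := Finset.card_le_card hsub
  -- B factorization
  have hBsplit : B = (∏ i ∈ I5, (1 - (X:Polynomial ℚ) ^ (4 * i + 5)))
      * ∏ i ∈ (Finset.range k).filter (fun i => ¬ n ∣ 4 * i + 5),
          (1 - (X:Polynomial ℚ) ^ (4 * i + 5)) := by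
    rw [hBdef]
    rw [Finset.prod_congr rfl (fun i _ => hfactB i)]
    exact (Finset.prod_filter_mul_prod_filter_not _ _ _).symm
  obtain ⟨B2, hB2, hB2nd⟩ := prod_eq_pow_mul hp I5 (fun i => 1 - (X:Polynomial ℚ) ^ (4 * i + 5))
    (by
      intro i hi
      rw [hI5, Finset.mem_filter] at hi
      exact ⟨(cyc_dvd_one_sub_X_pow_iff n _ hn).mpr hi.2, hsqf _ (by omega)⟩)
  set B3 : Polynomial ℚ := ∏ i ∈ (Finset.range k).filter (fun i => ¬ n ∣ 4 * i + 5),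
      (1 - (X:Polynomial ℚ) ^ (4 * i + 5)) with hB3
  have hB3nd : ¬ Φ ∣ B3 := by
    intro hd
    obtain ⟨i, hi, hdi⟩ := hp.exists_mem_finset_dvd hd
    rw [Finset.mem_filter] at hi
    exact hi.2 ((cyc_dvd_one_sub_X_pow_iff n _ hn).mp hdi)
  set e : ℕ := I5.card with he
  set B1 : Polynomial ℚ := B2 * B3 with hB1
  have hBfact : B = Φ ^ e * B1 := by
    rw [hBsplit, hB2, hB1]; ring
  have hB1nd : ¬ Φ ∣ B1 := by
    intro hd
    rcases hp.dvd_mul.mp hd with h' | h'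
    · exact hB2nd h'
    · exact hB3nd h'
  -- A factorization
  have hAsplit : A = (∏ i ∈ I3, (1 - (X:Polynomial ℚ) ^ (4 * i + 3)))
      * ∏ i ∈ (Finset.range k).filter (fun i => ¬ n ∣ 4 * i + 3),
          (1 - (X:Polynomial ℚ) ^ (4 * i + 3)) := by
    rw [hAdef]
    rw [Finset.prod_congr rfl (fun i _ => hfactA i)]
    exact (Finset.prod_filter_mul_prod_filter_not _ _ _).symm
  set c3 : ℕ := I3.card with hc3
  have hAdvd : Φ ^ c3 ∣ A := by
    rw [hAsplit]
    refine Dvd.dvd.mul_right ?_ _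
    have : Φ ^ c3 = ∏ _i ∈ I3, Φ := by rw [Finset.prod_const, hc3]
    rw [this]
    refine Finset.prod_dvd_prod_of_dvd _ _ ?_
    intro i hi
    rw [hI3, Finset.mem_filter] at hi
    exact (cyc_dvd_one_sub_X_pow_iff n _ hn).mpr hi.2
  obtain ⟨A1, hA1⟩ := hAdvd
  -- S factorization
  have hSgeom : S * ((X:Polynomial ℚ) ^ 2 - 1) = (X:Polynomial ℚ) ^ (2 * n ^ 2) - 1 := by
    have h1 : S = ∑ i ∈ Finset.range (n ^ 2), ((X:Polynomial ℚ) ^ 2) ^ i := by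
      rw [hSdef]; exact Finset.sum_congr rfl (fun i _ => pow_mul X 2 i)
    rw [h1, geom_sum_mul, ← pow_mul]
  have hSdvd : Φ ∣ S := by
    have h1 : Φ ∣ (X:Polynomial ℚ) ^ (2 * n ^ 2) - 1 :=
      (cyc_dvd_X_pow_sub_one_iff n _ hn).mpr ⟨2 * n, by ring⟩
    rw [← hSgeom] at h1
    rcases hp.dvd_mul.mp h1 with h' | h'
    · exact h'
    · exfalso
      have h2 := (cyc_dvd_X_pow_sub_one_iff n 2 hn).mp h'
      have := Nat.le_of_dvd (by norm_num) h2
      omega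
  obtain ⟨S1, hS1⟩ := hSdvd
  -- the witnesses
  refine ⟨Φ ^ (c3 - 1 - e) * S1 * A1, B1 * X ^ k, ?_, ?_⟩
  · intro hd
    rcases hp.dvd_mul.mp hd with h' | h'
    · exact hB1nd h'
    · have hdX : Φ ∣ X := hp.dvd_of_dvd_pow h'
      have hdeg := Polynomial.natDegree_le_of_dvd hdX Polynomial.X_ne_zero
      rw [Polynomial.natDegree_X, hΦ, Polynomial.natDegree_cyclotomic] at hdeg
      have hev : Nat.totient n % 2 = 0 := by
        obtain ⟨r, hr⟩ := Nat.totient_even (n := n) (by omega)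
        omega
      have hpos := Nat.totient_pos.mpr hn
      omega
  · -- key polynomial identity
    have hkey : S * A * (B1 * X ^ k) = Φ ^ 2 * (Φ ^ (c3 - 1 - e) * S1 * A1) * (B * X ^ k) := by
      rw [hS1, hA1, hBfact]
      have h1 : Φ * S1 * (Φ ^ c3 * A1) * (B1 * X ^ k)
          = Φ ^ (1 + c3) * (S1 * A1 * B1 * X ^ k) := by
        rw [pow_add, pow_one]; ring
      have h2 : Φ ^ 2 * (Φ ^ (c3 - 1 - e) * S1 * A1) * (Φ ^ e * B1 * X ^ k)
          = Φ ^ (2 + (c3 - 1 - e) + e) * (S1 * A1 * B1 * X ^ k) := by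
        rw [pow_add, pow_add]; ring
      rw [h1, h2]
      congr 1
      congr 1
      omega
    -- move to RatFunc
    set φ := algebraMap (Polynomial ℚ) (RatFunc ℚ) with hφ
    have hQ : Q = φ X := (RatFunc.algebraMap_X).symm
    have hSum : (∑ i ∈ Finset.range (n ^ 2), Q ^ (2 * i)) = φ S := by
      rw [hSdef, map_sum]
      exact Finset.sum_congr rfl (fun i _ => by rw [hQ, map_pow])
    have hA' : qPoch (Q ^ 3) (Q ^ 4) k = φ A := by
      rw [qPoch, hAdef, map_prod]
      refine Finset.prod_congr rfl (fun i _ => ?_)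
      rw [map_sub, map_one, map_mul, map_pow, map_pow, map_pow, hQ]
    have hB' : qPoch (Q ^ 5) (Q ^ 4) k = φ B := by
      rw [qPoch, hBdef, map_prod]
      refine Finset.prod_congr rfl (fun i _ => ?_)
      rw [map_sub, map_one, map_mul, map_pow, map_pow, map_pow, hQ]
    have hinj' : Function.Injective φ := IsFractionRing.injective _ _
    have hBne : φ B ≠ 0 := by
      have hB0 : B ≠ 0 := by
        rw [hBdef]
        refine Finset.prod_ne_zero_iff.mpr (fun i _ => ?_)
        intro hcon
        have := congrArg (Polynomial.eval 0) hcon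
        simp at this
      intro hc
      exact hB0 (hinj' (by rw [hc, map_zero]))
    have hQne : Q ≠ 0 := RatFunc.X_ne_zero
    have hQkne : Q ^ k ≠ 0 := pow_ne_zero _ hQne
    rw [hSum, hA', hB']
    have final := congrArg φ hkey
    simp only [map_mul, map_pow] at final
    rw [← hQ] at final
    field_simp [hQne, hBne]
    simp only [map_mul, map_pow, ← hQ]
    linear_combination final
end

section
/- Let m and n be positive integers with n ≡ 3 (mod 4). If the sum S_2 over k from 0 to mn+(n-1)/2 of (1+q^{4k+1})(q^2;q^4)_k^3/((1+q)(q^4;q^4)_k^3)·q^k is divisible by Φ_n(q)^2, then so is the sum S_1 over k from 0 to (m+1)n-1 of the same summand, because for each k with mn+(n-1)/2 < k ≤ (m+1)n-1 the individual summand (q^2;q^4)_k^3/(q^4;q^4)_k^3 is divisible by Φ_n(q)^3. -/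
open Polynomial Finset

private lemma cycPrime {n : ℕ} (hn : 0 < n) : Prime (cyclotomic n ℚ) :=
  (cyclotomic.irreducible_rat hn).prime

/-- explicit cofactor -/
private noncomputable def cofac (n M : ℕ) : Polynomial ℚ :=
  -(∏ d ∈ M.divisors.erase n, cyclotomic d ℚ)

private lemma cyc_fac {n M : ℕ} (hn : 0 < n) (hM : 0 < M) (h : n ∣ M) :
    (1 - X ^ M : Polynomial ℚ) = cyclotomic n ℚ * cofac n M := by
  have h1 := prod_cyclotomic_eq_X_pow_sub_one hM ℚ
  have hmem : n ∈ M.divisors := Nat.mem_divisors.2 ⟨h, hM.ne'⟩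
  rw [← Finset.mul_prod_erase _ _ hmem] at h1
  unfold cofac
  linear_combination h1

private lemma cyc_not_dvd_cofac {n : ℕ} (hn : 0 < n) (M : ℕ) :
    ¬ cyclotomic n ℚ ∣ cofac n M := by
  unfold cofac
  rw [dvd_neg]
  intro hd
  obtain ⟨d, hdmem, hdvd⟩ := ((cycPrime hn).dvd_finset_prod_iff _).1 hd
  have hne : n ≠ d := fun he => (Finset.mem_erase.1 hdmem).1 he.symm
  exact (cycPrime hn).not_unit
    ((cyclotomic.isCoprime_rat (Ne.symm hne)).isUnit_of_dvd' hdvd dvd_rfl)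

private lemma cyc_not_dvd_X_pow {n M : ℕ} (hn : 0 < n) (hM : 0 < M) (h : ¬ n ∣ M) :
    ¬ cyclotomic n ℚ ∣ (1 - X ^ M : Polynomial ℚ) := by
  intro hd
  rw [show (1 - X ^ M : Polynomial ℚ) = -(X ^ M - 1) by ring, dvd_neg,
    ← prod_cyclotomic_eq_X_pow_sub_one hM ℚ] at hd
  obtain ⟨d, hdmem, hdvd⟩ := ((cycPrime hn).dvd_finset_prod_iff _).1 hd
  rcases eq_or_ne n d with rfl | hne
  · exact h (Nat.mem_divisors.1 hdmem).1
  · exact (cycPrime hn).not_unit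
      ((cyclotomic.isCoprime_rat (Ne.symm hne)).isUnit_of_dvd' hdvd dvd_rfl)


/-- For positive integers `m, n` with `n ≡ 3 (mod 4)` and `mn+(n-1)/2 < k ≤ (m+1)n-1`,
the rational function `(q^2;q^4)_k^3/(q^4;q^4)_k^3` has `Φ_n(q)`-adic valuation at least 3. -/
theorem stmt17 (m n k : ℕ) (hm : 0 < m) (hn : 0 < n) (h : n % 4 = 3)
    (hk1 : m * n + (n - 1) / 2 < k) (hk2 : k ≤ (m + 1) * n - 1) :
    ∃ a b : Polynomial ℚ, ¬ (Polynomial.cyclotomic n ℚ ∣ b) ∧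
      (qPoch (Q ^ 2) (Q ^ 4) k ^ 3 / qPoch (Q ^ 4) (Q ^ 4) k ^ 3)
        * algebraMap (Polynomial ℚ) (RatFunc ℚ) b
      = algebraMap (Polynomial ℚ) (RatFunc ℚ) (Polynomial.cyclotomic n ℚ ^ 3 * a) := by
  set Φ := cyclotomic n ℚ with hΦ
  have hprime := cycPrime hn
  set t := (n - 1) / 2 with htdef
  have ht : n = 2 * t + 1 := by omega
  have hn3 : 3 ≤ n := by omega
  -- polynomial numerator and denominator
  set Pn : Polynomial ℚ := ∏ i ∈ Finset.range k, (1 - X ^ (4 * i + 2)) with hPn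
  set Pd : Polynomial ℚ := ∏ i ∈ Finset.range k, (1 - X ^ (4 * i + 4)) with hPd
  have A := algebraMap (Polynomial ℚ) (RatFunc ℚ)
  -- qPoch identification
  have hqn : qPoch (Q ^ 2) (Q ^ 4) k = algebraMap (Polynomial ℚ) (RatFunc ℚ) Pn := by
    rw [hPn, map_prod, qPoch]
    refine Finset.prod_congr rfl fun i _ => ?_
    rw [map_sub, map_one, map_pow, RatFunc.algebraMap_X]
    rw [show Q ^ 2 * (Q ^ 4) ^ i = Q ^ (4 * i + 2) by rw [← pow_mul, ← pow_add]; ring_nf]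
    rfl
  have hqd : qPoch (Q ^ 4) (Q ^ 4) k = algebraMap (Polynomial ℚ) (RatFunc ℚ) Pd := by
    rw [hPd, map_prod, qPoch]
    refine Finset.prod_congr rfl fun i _ => ?_
    rw [map_sub, map_one, map_pow, RatFunc.algebraMap_X]
    rw [show Q ^ 4 * (Q ^ 4) ^ i = Q ^ (4 * i + 4) by rw [← pow_mul, ← pow_add]; ring_nf]
    rfl
  -- numerator: Φ^(m+1) ∣ Pn
  have hcop2 : Nat.Coprime n 2 := Nat.coprime_two_right.2 ⟨t, by omega⟩
  have hcop4 : Nat.Coprime n 4 := by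
    simpa using (Nat.Coprime.mul_right hcop2 hcop2).pow_right 1
  have hmn : (m + 1) * n = m * n + n := by ring
  have hnumdvd : Φ ^ (m + 1) ∣ Pn := by
    set g : ℕ → ℕ := fun j => j * n + t with hg
    have hginj : Function.Injective g := by
      intro a b hab
      simp only [hg] at hab
      have : a * n = b * n := by omega
      exact Nat.eq_of_mul_eq_mul_right hn this
    have hsub : (Finset.range (m + 1)).image g ⊆ Finset.range k := by
      intro i hi
      obtain ⟨j, hj, rfl⟩ := Finset.mem_image.1 hi
      have hjm : j ≤ m := by simpa [Nat.lt_succ_iff] using hj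
      have : j * n ≤ m * n := Nat.mul_le_mul_right n hjm
      simp only [Finset.mem_range, hg]
      omega
    have hdvd1 : Φ ^ (m + 1) ∣ ∏ i ∈ (Finset.range (m + 1)).image g, (1 - X ^ (4 * i + 2)) := by
      have hdvd0 : ∀ i ∈ (Finset.range (m + 1)).image g,
          (fun _ => Φ) i ∣ (1 - X ^ (4 * i + 2) : Polynomial ℚ) := by
        intro i hi
        obtain ⟨j, hj, rfl⟩ := Finset.mem_image.1 hi
        have hdn : n ∣ 4 * g j + 2 := ⟨4 * j + 2, by
          show 4 * (j * n + t) + 2 = n * (4 * j + 2)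
          rw [ht]; ring⟩
        exact ⟨cofac n (4 * g j + 2), cyc_fac hn (by omega) hdn⟩
      have := Finset.prod_dvd_prod_of_dvd (fun _ => Φ)
        (fun i => (1 - X ^ (4 * i + 2) : Polynomial ℚ)) hdvd0
      rwa [Finset.prod_const, Finset.card_image_of_injective _ hginj,
          Finset.card_range] at this
    exact hdvd1.trans (Finset.prod_dvd_prod_of_subset _ _ _ hsub)
  obtain ⟨N₀, hN⟩ := hnumdvd
  -- denominator: Pd = Φ^m * D₀ with Φ ∤ D₀
  have hK : k < (m + 1) * n := by
    have h1 : 1 ≤ (m + 1) * n := Nat.mul_pos (by omega) hn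
    omega
  have hfilter : (Finset.range k).filter (fun i => n ∣ i + 1)
      = (Finset.range m).image (fun j => j * n + (n - 1)) := by
    ext i
    simp only [Finset.mem_filter, Finset.mem_range, Finset.mem_image]
    constructor
    · rintro ⟨hik, c, hc⟩
      rw [mul_comm n c] at hc
      have hc1 : 1 ≤ c := by rcases Nat.eq_zero_or_pos c with rfl | h1; omega; omega
      have h3 : (c - 1) * n + n = c * n := by
        have := Nat.sub_add_cancel hc1
        calc (c - 1) * n + n = (c - 1 + 1) * n := by ring
        _ = c * n := by rw [this]
      refine ⟨c - 1, ?_, by omega⟩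
      by_contra hcm
      have h4 : m + 1 ≤ c := by omega
      have h5 := Nat.mul_le_mul_right n h4
      omega
    · rintro ⟨j, hj, rfl⟩
      have h4 : j + 1 ≤ m := by omega
      have h5 : (j + 1) * n ≤ m * n := Nat.mul_le_mul_right n h4
      have h6 : (j + 1) * n = j * n + n := by ring
      refine ⟨by omega, ⟨j + 1, ?_⟩⟩
      have h7 : n * (j + 1) = j * n + n := by ring
      omega
  set D₀ : Polynomial ℚ := (∏ j ∈ Finset.range m, cofac n (4 * (j * n + (n - 1)) + 4))
      * ∏ i ∈ (Finset.range k).filter (fun i => ¬ n ∣ i + 1), (1 - X ^ (4 * i + 4)) with hD₀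
  have hD : Pd = Φ ^ m * D₀ := by
    rw [hPd, ← Finset.prod_filter_mul_prod_filter_not (Finset.range k) (fun i => n ∣ i + 1),
      hfilter, Finset.prod_image (fun a _ b _ hab => by
        have : a * n = b * n := by omega
        exact Nat.eq_of_mul_eq_mul_right hn this)]
    have : ∀ j ∈ Finset.range m, (1 - X ^ (4 * (j * n + (n - 1)) + 4) : Polynomial ℚ)
        = Φ * cofac n (4 * (j * n + (n - 1)) + 4) := by
      intro j hj
      refine cyc_fac hn (by omega) ⟨4 * j + 4, ?_⟩
      have h6 : n * (4 * j + 4) = 4 * (j * n) + 4 * n := by ring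
      omega
    rw [Finset.prod_congr rfl this, Finset.prod_mul_distrib, Finset.prod_const,
      Finset.card_range, hD₀]
    ring
  have hD₀nd : ¬ Φ ∣ D₀ := by
    rw [hD₀]
    intro hdd
    rcases hprime.2.2 _ _ hdd with hd1 | hd2
    · obtain ⟨j, _, hdvd⟩ := (hprime.dvd_finset_prod_iff _).1 hd1
      exact cyc_not_dvd_cofac hn _ hdvd
    · obtain ⟨i, hi, hdvd⟩ := (hprime.dvd_finset_prod_iff _).1 hd2
      have hni : ¬ n ∣ i + 1 := (Finset.mem_filter.1 hi).2
      refine cyc_not_dvd_X_pow hn (by omega) ?_ hdvd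
      intro hd4
      have h4 : 4 * i + 4 = 4 * (i + 1) := by ring
      rw [h4] at hd4
      exact hni (hcop4.dvd_of_dvd_mul_left hd4)
  -- nonvanishing
  have hfacne : ∀ M : ℕ, 0 < M → (1 - X ^ M : Polynomial ℚ) ≠ 0 := by
    intro M hM h0
    have : (1 - X ^ M : Polynomial ℚ).coeff 0 = 0 := by rw [h0]; simp
    rw [coeff_sub, coeff_one, coeff_X_pow] at this
    simp [hM.ne] at this
  have hPdne : Pd ≠ 0 := by
    rw [hPd]
    exact Finset.prod_ne_zero_iff.2 fun i _ => hfacne _ (by omega)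
  have hD₀ne : D₀ ≠ 0 := fun h0 => hPdne (by rw [hD, h0, mul_zero])
  -- conclude
  refine ⟨N₀ ^ 3, D₀ ^ 3, fun hdd => hD₀nd (hprime.dvd_of_dvd_pow hdd), ?_⟩
  rw [hqn, hqd, div_mul_eq_mul_div, div_eq_iff (by
    exact pow_ne_zero 3 ((RatFunc.algebraMap_ne_zero hPdne)))]
  rw [← map_pow, ← map_pow, ← map_mul, ← map_mul]
  refine congrArg (algebraMap (Polynomial ℚ) (RatFunc ℚ)) ?_
  rw [hN, hD]
  ring
end

section
/- Let m and n be positive integers with n ≡ 3 (mod 4), and set N = mn+(n-1)/2. Then the quantity (q^6;q^4)_N (q^{-(4m+2)n};q^4)_N / ((q^4;q^4)_N (q^{2-(4m+2)n};q^4)_N), regarded as a rational function of q, is divisible by Φ_n(q)^2 in the localization of ℚ[q] at Φ_n(q). -/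
open Polynomial Finset

lemma aux_not_dvd_X_pow {n : ℕ} (hn : 1 < n) (j : ℕ) : ¬ cyclotomic n ℚ ∣ X ^ j := by
  intro hdvd
  have hprime : Prime (cyclotomic n ℚ) := (cyclotomic.irreducible_rat (by omega)).prime
  have hX : cyclotomic n ℚ ∣ X := hprime.dvd_of_dvd_pow hdvd
  obtain ⟨t, ht⟩ := hX
  have h0 : (X : ℚ[X]).coeff 0 = (cyclotomic n ℚ).coeff 0 * t.coeff 0 := by
    rw [ht, mul_coeff_zero]
  rw [cyclotomic_coeff_zero ℚ hn, coeff_X_zero, one_mul] at h0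
  have hXt : (X : ℚ[X]) ∣ t := X_dvd_iff.mpr h0.symm
  obtain ⟨u, hu⟩ := hXt
  rw [hu, ← mul_assoc, mul_comm (cyclotomic n ℚ) X, mul_assoc] at ht
  have : (1 : ℚ[X]) = cyclotomic n ℚ * u := by
    have hX0 : (X : ℚ[X]) ≠ 0 := X_ne_zero
    exact mul_left_cancel₀ hX0 (by simpa using ht)
  exact hprime.not_isUnit (IsUnit.of_mul_eq_one _ this.symm)

lemma aux_key_split {n : ℕ} (hn : 1 < n) {e : ℕ} (he : 0 < e) :
    ∃ g : ℚ[X], (X : ℚ[X]) ^ e - 1 = cyclotomic n ℚ ^ (if n ∣ e then 1 else 0) * g ∧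
      ¬ cyclotomic n ℚ ∣ g := by
  have hprime : Prime (cyclotomic n ℚ) := (cyclotomic.irreducible_rat (by omega)).prime
  by_cases hd : n ∣ e
  · obtain ⟨k, hk⟩ := id hd
    have hdvd : cyclotomic n ℚ ∣ (X : ℚ[X]) ^ e - 1 := by
      have h1 : cyclotomic n ℚ ∣ (X : ℚ[X]) ^ n - 1 := by
        rw [← prod_cyclotomic_eq_X_pow_sub_one (by omega : 0 < n) ℚ]
        exact Finset.dvd_prod_of_mem _ (Nat.mem_divisors_self n (by omega))
      have h2 : ((X : ℚ[X]) ^ n - 1) ∣ (X : ℚ[X]) ^ e - 1 := by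
        have := sub_dvd_pow_sub_pow ((X : ℚ[X]) ^ n) 1 k
        simpa [← pow_mul, ← hk] using this
      exact h1.trans h2
    obtain ⟨g, hg⟩ := hdvd
    refine ⟨g, by rw [if_pos hd, pow_one]; exact hg, ?_⟩
    intro hcontra
    have hsq : Squarefree ((X : ℚ[X]) ^ e - 1) := by
      have : ((X : ℚ[X]) ^ e - C 1).Separable :=
        separable_X_pow_sub_C (1 : ℚ) (by exact_mod_cast he.ne') one_ne_zero
      simpa using this.squarefree
    have : IsUnit (cyclotomic n ℚ) := by
      refine hsq (cyclotomic n ℚ) ?_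
      obtain ⟨w, hw⟩ := hcontra
      exact ⟨w, by rw [hg, hw]; ring⟩
    exact hprime.not_unit this
  · refine ⟨(X : ℚ[X]) ^ e - 1, by simp [if_neg hd], ?_⟩
    intro hcontra
    rw [← prod_cyclotomic_eq_X_pow_sub_one he ℚ] at hcontra
    obtain ⟨d, hdmem, hdd⟩ := hprime.exists_mem_finset_dvd hcontra
    have hd0 : 0 < d := Nat.pos_of_mem_divisors hdmem
    have : cyclotomic n ℚ = cyclotomic d ℚ :=
      eq_of_monic_of_associated (cyclotomic.monic n ℚ) (cyclotomic.monic d ℚ)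
        ((cyclotomic.irreducible_rat (by omega)).associated_of_dvd
          (cyclotomic.irreducible_rat hd0) hdd)
    have : n = d := cyclotomic_injective this
    exact hd ((this ▸ Nat.dvd_of_mem_divisors hdmem))


lemma aux_prod_split {P : ℚ[X]} (hP : Prime P) (s : Finset ℕ) (f : ℕ → ℚ[X])
    (c : ℕ → Prop) [DecidablePred c]
    (h : ∀ i ∈ s, ∃ g, f i = P ^ (if c i then 1 else 0) * g ∧ ¬ P ∣ g) :
    ∃ B, ∏ i ∈ s, f i = P ^ ((s.filter c).card) * B ∧ ¬ P ∣ B := by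
  classical
  induction s using Finset.induction_on with
  | empty => exact ⟨1, by simp, fun hd => hP.not_isUnit (isUnit_of_dvd_one hd)⟩
  | insert a s' ha ih =>
    obtain ⟨g, hg, hgnd⟩ := h a (mem_insert_self a s')
    obtain ⟨B, hB, hBnd⟩ := ih (fun i hi => h i (mem_insert_of_mem hi))
    refine ⟨g * B, ?_, fun hd => (hP.dvd_mul.mp hd).elim hgnd hBnd⟩
    rw [prod_insert ha, hg, hB, filter_insert]
    by_cases hc : c a
    · rw [if_pos hc, if_pos hc, card_insert_of_notMem (fun hmem => ha (mem_filter.mp hmem).1)]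
      ring
    · rw [if_neg hc, if_neg hc]
      ring

lemma aux_count_mod (n a s r : ℕ) (hs : s < n) (hr : r < n) :
    ((range (a * n + s)).filter (fun i => i % n = r)).card
      = a + if r < s then 1 else 0 := by
  have hn : 0 < n := by omega
  have himg : (range (a * n + s)).filter (fun i => i % n = r)
      = (range (a + if r < s then 1 else 0)).image (fun j => j * n + r) := by
    ext i
    simp only [mem_filter, mem_range, mem_image]
    constructor
    · rintro ⟨hi, hmod⟩
      refine ⟨i / n, ?_, ?_⟩
      · by_contra hcon
        push_neg at hcon
        have h3 : i % n + i / n * n = i := Nat.mod_add_div' i n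
        by_cases hrs : r < s
        · rw [if_pos hrs] at hcon
          have h2 : (a + 1) * n ≤ i / n * n := Nat.mul_le_mul_right n hcon
          have h4 : (a + 1) * n = a * n + n := by ring
          omega
        · rw [if_neg hrs] at hcon
          have h2 : a * n ≤ i / n * n := Nat.mul_le_mul_right n (by omega)
          omega
      · have h3 : i % n + i / n * n = i := Nat.mod_add_div' i n
        omega
    · rintro ⟨j, hj, rfl⟩
      have hmod : (j * n + r) % n = r := by
        have he : j * n + r = r + j * n := by ring
        rw [he, Nat.add_mul_mod_self_right, Nat.mod_eq_of_lt hr]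
      refine ⟨?_, hmod⟩
      by_cases hrs : r < s
      · rw [if_pos hrs] at hj
        have h2 : j * n ≤ a * n := Nat.mul_le_mul_right n (by omega)
        omega
      · rw [if_neg hrs] at hj
        have h2 : (j + 1) * n ≤ a * n := Nat.mul_le_mul_right n (by omega)
        have h4 : (j + 1) * n = j * n + n := by ring
        omega
  rw [himg, card_image_of_injective _ (fun j₁ j₂ hj => by
    have : j₁ * n = j₂ * n := by omega
    exact Nat.eq_of_mul_eq_mul_right hn this), card_range]

lemma aux_gen_mod {n : ℕ} (hodd : n % 2 = 1) {c r : ℕ} (hr : r < n)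
    (hdvd : n ∣ c + 4 * r) (i : ℕ) : (n ∣ c + 4 * i) ↔ i % n = r := by
  have hcop : Nat.Coprime 4 n := by
    have h2 : Nat.Coprime 2 n := Nat.coprime_two_left.mpr (Nat.odd_iff.mpr hodd)
    simpa using h2.pow_left 2
  constructor
  · intro hdi
    have h1 : c + 4 * i ≡ c + 4 * r [MOD n] :=
      ((Nat.modEq_zero_iff_dvd).mpr hdi).trans ((Nat.modEq_zero_iff_dvd).mpr hdvd).symm
    have h2 : 4 * i ≡ 4 * r [MOD n] := Nat.ModEq.add_left_cancel' c h1
    have h3 : i ≡ r [MOD n] := Nat.ModEq.cancel_left_of_coprime hcop.symm h2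
    simpa [Nat.ModEq, Nat.mod_eq_of_lt hr] using h3
  · intro hmod
    have h3 : i ≡ r [MOD n] := by simpa [Nat.ModEq, Nat.mod_eq_of_lt hr] using hmod
    have h1 : c + 4 * i ≡ c + 4 * r [MOD n] := (h3.mul_left 4).add_left c
    exact (Nat.modEq_zero_iff_dvd).mp (h1.trans ((Nat.modEq_zero_iff_dvd).mpr hdvd))

/-- For positive integers `m, n` with `n ≡ 3 (mod 4)` and `N = mn+(n-1)/2`, the rational
function `(q^6;q^4)_N (q^{-(4m+2)n};q^4)_N / ((q^4;q^4)_N (q^{2-(4m+2)n};q^4)_N)` is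
divisible by `Φ_n(q)^2` in the localization of `ℚ[q]` at `Φ_n(q)`. -/
theorem stmt18 (m n : ℕ) (hm : 0 < m) (hn : 0 < n) (h : n % 4 = 3) :
    ∃ a b : Polynomial ℚ, ¬ (Polynomial.cyclotomic n ℚ ∣ b) ∧
      (qPoch (Q ^ 6) (Q ^ 4) (m * n + (n - 1) / 2)
          * qPoch ((Q ^ ((4 * m + 2) * n))⁻¹) (Q ^ 4) (m * n + (n - 1) / 2)
        / (qPoch (Q ^ 4) (Q ^ 4) (m * n + (n - 1) / 2)
            * qPoch (Q ^ 2 * (Q ^ ((4 * m + 2) * n))⁻¹) (Q ^ 4) (m * n + (n - 1) / 2)))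
        * algebraMap (Polynomial ℚ) (RatFunc ℚ) b
      = algebraMap (Polynomial ℚ) (RatFunc ℚ) (Polynomial.cyclotomic n ℚ ^ 2 * a) := by
  classical
  have hn1 : 1 < n := by omega
  have hn3 : 3 ≤ n := by omega
  set al := algebraMap (Polynomial ℚ) (RatFunc ℚ) with hal
  set N := m * n + (n - 1) / 2 with hN
  set d := (4 * m + 2) * n with hdd
  have hdlin : d = 4 * (m * n) + 2 * n := by rw [hdd]; ring
  set Φ := cyclotomic n ℚ with hΦ
  have hprime : Prime Φ := (cyclotomic.irreducible_rat hn).prime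
  have hQ : al X = Q := RatFunc.algebraMap_X
  have hQ0 : Q ≠ 0 := RatFunc.X_ne_zero
  have hQd0 : Q ^ d ≠ 0 := pow_ne_zero _ hQ0
  have hinv : (Q ^ d)⁻¹ * Q ^ d = 1 := inv_mul_cancel₀ hQd0
  -- the four polynomials
  set A1 : ℚ[X] := ∏ i ∈ range N, ((1 : ℚ[X]) - X ^ (6 + 4 * i)) with hA1
  set A2 : ℚ[X] := ∏ i ∈ range N, ((X : ℚ[X]) ^ (4 * i) * (X ^ (d - 4 * i) - 1)) with hA2
  set A3 : ℚ[X] := ∏ i ∈ range N, ((1 : ℚ[X]) - X ^ (4 + 4 * i)) with hA3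
  set A4 : ℚ[X] := ∏ i ∈ range N, ((X : ℚ[X]) ^ (2 + 4 * i) * (X ^ (d - (2 + 4 * i)) - 1))
    with hA4
  have harith : ∀ i < N, 2 + 4 * i < d := by
    intro i hi
    have : i < m * n + (n - 1) / 2 := hi
    omega
  -- qPoch computations
  have hq1 : qPoch (Q ^ 6) (Q ^ 4) N = al A1 := by
    rw [qPoch, hA1, map_prod]
    refine prod_congr rfl fun i _ => ?_
    rw [map_sub, map_one, map_pow, hQ]
    ring
  have hq3 : qPoch (Q ^ 4) (Q ^ 4) N = al A3 := by
    rw [qPoch, hA3, map_prod]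
    refine prod_congr rfl fun i _ => ?_
    rw [map_sub, map_one, map_pow, hQ]
    ring
  have hq2 : qPoch ((Q ^ d)⁻¹) (Q ^ 4) N = al A2 / (Q ^ d) ^ N := by
    rw [qPoch, hA2, map_prod]
    have hps : (∏ x ∈ range N, al (X ^ (4 * x) * (X ^ (d - 4 * x) - 1))) / (Q ^ d) ^ N
        = ∏ x ∈ range N, (al (X ^ (4 * x) * (X ^ (d - 4 * x) - 1)) / Q ^ d) := by
      rw [prod_div_distrib, prod_const, card_range]
    rw [hps]
    refine prod_congr rfl fun i hi => ?_
    have hilt := harith i (mem_range.mp hi)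
    rw [map_mul, map_sub, map_one, map_pow, map_pow, hQ]
    rw [eq_div_iff hQd0]
    have hu : Q ^ (4 * i) * Q ^ (d - 4 * i) = Q ^ d := by
      rw [← pow_add]; congr 1; omega
    linear_combination (-(Q ^ (4 * i))) * hinv - hu
  have hq4 : qPoch (Q ^ 2 * (Q ^ d)⁻¹) (Q ^ 4) N = al A4 / (Q ^ d) ^ N := by
    rw [qPoch, hA4, map_prod]
    have hps : (∏ x ∈ range N, al (X ^ (2 + 4 * x) * (X ^ (d - (2 + 4 * x)) - 1))) / (Q ^ d) ^ N
        = ∏ x ∈ range N, (al (X ^ (2 + 4 * x) * (X ^ (d - (2 + 4 * x)) - 1)) / Q ^ d) := by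
      rw [prod_div_distrib, prod_const, card_range]
    rw [hps]
    refine prod_congr rfl fun i hi => ?_
    have hilt := harith i (mem_range.mp hi)
    rw [map_mul, map_sub, map_one, map_pow, map_pow, hQ]
    rw [eq_div_iff hQd0]
    have hu : Q ^ (2 + 4 * i) * Q ^ (d - (2 + 4 * i)) = Q ^ d := by
      rw [← pow_add]; congr 1; omega
    linear_combination (-(Q ^ (2 + 4 * i))) * hinv - hu
  -- splits
  have hndd : n ∣ d := ⟨4 * m + 2, by rw [hdd]; ring⟩
  obtain ⟨B1, hB1, hB1nd⟩ := aux_prod_split hprime (range N)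
      (fun i => (1 : ℚ[X]) - X ^ (6 + 4 * i)) (fun i => n ∣ 6 + 4 * i) (fun i _ => by
    obtain ⟨g, hg, hgnd⟩ := aux_key_split hn1 (show 0 < 6 + 4 * i by omega)
    rw [← hΦ] at hg
    refine ⟨-g, ?_, fun hdv => hgnd (dvd_neg.mp hdv)⟩
    show (1 : ℚ[X]) - X ^ (6 + 4 * i) = Φ ^ (if n ∣ 6 + 4 * i then 1 else 0) * -g
    rw [← neg_sub ((X:ℚ[X])^(6+4*i)) 1, hg]; ring)
  obtain ⟨B3, hB3, hB3nd⟩ := aux_prod_split hprime (range N)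
      (fun i => (1 : ℚ[X]) - X ^ (4 + 4 * i)) (fun i => n ∣ 4 + 4 * i) (fun i _ => by
    obtain ⟨g, hg, hgnd⟩ := aux_key_split hn1 (show 0 < 4 + 4 * i by omega)
    rw [← hΦ] at hg
    refine ⟨-g, ?_, fun hdv => hgnd (dvd_neg.mp hdv)⟩
    show (1 : ℚ[X]) - X ^ (4 + 4 * i) = Φ ^ (if n ∣ 4 + 4 * i then 1 else 0) * -g
    rw [← neg_sub ((X:ℚ[X])^(4+4*i)) 1, hg]; ring)
  obtain ⟨B2, hB2, hB2nd⟩ := aux_prod_split hprime (range N)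
      (fun i => (X : ℚ[X]) ^ (4 * i) * (X ^ (d - 4 * i) - 1)) (fun i => n ∣ 0 + 4 * i)
      (fun i hi => by
    have hilt := harith i (mem_range.mp hi)
    obtain ⟨g, hg, hgnd⟩ := aux_key_split hn1 (show 0 < d - 4 * i by omega)
    have hiff : (n ∣ d - 4 * i) ↔ (n ∣ 0 + 4 * i) := by
      constructor
      · intro hx
        have := Nat.dvd_sub hndd hx
        have he : d - (d - 4 * i) = 0 + 4 * i := by omega
        rwa [he] at this
      · intro hx
        exact Nat.dvd_sub hndd (by simpa using hx)
    rw [← hΦ] at hg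
    refine ⟨X ^ (4 * i) * g, ?_, fun hdv => (hprime.dvd_mul.mp hdv).elim
      (aux_not_dvd_X_pow hn1 _) hgnd⟩
    show (X : ℚ[X]) ^ (4 * i) * (X ^ (d - 4 * i) - 1)
      = Φ ^ (if n ∣ 0 + 4 * i then 1 else 0) * (X ^ (4 * i) * g)
    rw [hg]
    simp only [hiff]
    ring)
  obtain ⟨B4, hB4, hB4nd⟩ := aux_prod_split hprime (range N)
      (fun i => (X : ℚ[X]) ^ (2 + 4 * i) * (X ^ (d - (2 + 4 * i)) - 1)) (fun i => n ∣ 2 + 4 * i)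
      (fun i hi => by
    have hilt := harith i (mem_range.mp hi)
    obtain ⟨g, hg, hgnd⟩ := aux_key_split hn1 (show 0 < d - (2 + 4 * i) by omega)
    have hiff : (n ∣ d - (2 + 4 * i)) ↔ (n ∣ 2 + 4 * i) := by
      constructor
      · intro hx
        have := Nat.dvd_sub hndd hx
        have he : d - (d - (2 + 4 * i)) = 2 + 4 * i := by omega
        rwa [he] at this
      · intro hx
        exact Nat.dvd_sub hndd hx
    rw [← hΦ] at hg
    refine ⟨X ^ (2 + 4 * i) * g, ?_, fun hdv => (hprime.dvd_mul.mp hdv).elim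
      (aux_not_dvd_X_pow hn1 _) hgnd⟩
    show (X : ℚ[X]) ^ (2 + 4 * i) * (X ^ (d - (2 + 4 * i)) - 1)
      = Φ ^ (if n ∣ 2 + 4 * i then 1 else 0) * (X ^ (2 + 4 * i) * g)
    rw [hg]
    simp only [hiff]
    ring)
  -- cardinalities
  have hodd : n % 2 = 1 := by omega
  have hcard1 : ((range N).filter (fun i => n ∣ 6 + 4 * i)).card = m + 1 := by
    rw [filter_congr (fun i _ => aux_gen_mod hodd (show (n-3)/2 < n by omega)
      ⟨2, by omega⟩ i), hN, aux_count_mod n m ((n-1)/2) ((n-3)/2) (by omega) (by omega),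
      if_pos (by omega)]
  have hcard2 : ((range N).filter (fun i => n ∣ 0 + 4 * i)).card = m + 1 := by
    rw [filter_congr (fun i _ => aux_gen_mod hodd (show 0 < n by omega)
      ⟨0, by omega⟩ i), hN, aux_count_mod n m ((n-1)/2) 0 (by omega) (by omega),
      if_pos (by omega)]
  have hcard3 : ((range N).filter (fun i => n ∣ 4 + 4 * i)).card = m := by
    rw [filter_congr (fun i _ => aux_gen_mod hodd (show n - 1 < n by omega)
      ⟨4, by omega⟩ i), hN, aux_count_mod n m ((n-1)/2) (n-1) (by omega) (by omega),
      if_neg (by omega)]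
    omega
  have hcard4 : ((range N).filter (fun i => n ∣ 2 + 4 * i)).card = m := by
    rw [filter_congr (fun i _ => aux_gen_mod hodd (show (n-1)/2 < n by omega)
      ⟨2, by omega⟩ i), hN, aux_count_mod n m ((n-1)/2) ((n-1)/2) (by omega) (by omega),
      if_neg (by omega)]
    omega
  rw [hcard1] at hB1
  rw [hcard2] at hB2
  rw [hcard3] at hB3
  rw [hcard4] at hB4
  rw [← hA1] at hB1
  rw [← hA2] at hB2
  rw [← hA3] at hB3
  rw [← hA4] at hB4
  -- nonvanishing
  have hone_sub : ∀ e : ℕ, 0 < e → ((1 : ℚ[X]) - X ^ e) ≠ 0 := by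
    intro e he hcon
    have h0 := congrArg (eval (0 : ℚ)) hcon
    simp [zero_pow he.ne'] at h0
  have hsub_one : ∀ e : ℕ, 0 < e → ((X : ℚ[X]) ^ e - 1) ≠ 0 := by
    intro e he hcon
    have h0 := congrArg (eval (0 : ℚ)) hcon
    simp [zero_pow he.ne'] at h0
  have hA3ne : A3 ≠ 0 := by
    rw [hA3]
    rw [prod_ne_zero_iff]
    exact fun i _ => hone_sub _ (by omega)
  have hA4ne : A4 ≠ 0 := by
    rw [hA4]
    rw [prod_ne_zero_iff]
    intro i hi
    exact mul_ne_zero (pow_ne_zero _ X_ne_zero)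
      (hsub_one _ (by have := harith i (mem_range.mp hi); omega))
  have h34ne : al (A3 * A4) ≠ 0 := RatFunc.algebraMap_ne_zero (mul_ne_zero hA3ne hA4ne)
  have hPn0 : (Q ^ d) ^ N ≠ 0 := pow_ne_zero _ hQd0
  -- conclusion
  refine ⟨B1 * B2, B3 * B4, fun hdv => (hprime.dvd_mul.mp hdv).elim hB3nd hB4nd, ?_⟩
  rw [hq1, hq2, hq3, hq4]
  have hE : al A1 * (al A2 / (Q ^ d) ^ N) / (al A3 * (al A4 / (Q ^ d) ^ N))
      = al (A1 * A2) / al (A3 * A4) := by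
    rw [map_mul, map_mul, mul_div_assoc', mul_div_assoc', div_div_div_comm,
      div_self hPn0, div_one]
  rw [hE, div_mul_eq_mul_div, div_eq_iff h34ne, ← map_mul, ← map_mul]
  congr 1
  rw [hB1, hB2, hB3, hB4]
  ring
end
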